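/- On the elliptic curve E over Q with coefficients (a1,a2,a3,a4,a6) = (-500894592455, 720663120331059917723712, 485010096730715360294683087532269632, 0, 0), the point (0,0) is a rational point of order exactly 7. -/

import Mathlib

def E : WeierstrassCurve.Affine ℚ :=
  ⟨-500894592455, 720663120331059917723712,
    485010096730715360294683087532269632, 0, 0⟩

namespace EAux

open WeierstrassCurve.Affine

lemma Ea₁ : E.a₁ = -500894592455 := rfl
lemma Ea₂ : E.a₂ = 720663120331059917723712 := rfl
lemma Ea₃ : E.a₃ = 485010096730715360294683087532269632 := rfl
lemma Ea₄ : E.a₄ = 0 := rfl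
lemma Ea₆ : E.a₆ = 0 := rfl

lemma some_eq {F : Type*} [Field F] {W : WeierstrassCurve.Affine F}
    {x y x' y' : F} (hx : x = x') (hy : y = y')
    (h : W.Nonsingular x y) (h' : W.Nonsingular x' y') :
    Point.some _ _ h = Point.some _ _ h' := by
  subst hx; subst hy; rfl

lemma nonsing (x y : ℚ)
    (he : y ^ 2 + (-500894592455 : ℚ) * x * y + 485010096730715360294683087532269632 * y =
      x ^ 3 + 720663120331059917723712 * x ^ 2)
    (hs : y ≠ -y - (-500894592455 : ℚ) * x - 485010096730715360294683087532269632) :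
    E.Nonsingular x y := by
  rw [WeierstrassCurve.Affine.nonsingular_iff, WeierstrassCurve.Affine.equation_iff]
  rw [Ea₁, Ea₂, Ea₃, Ea₄, Ea₆]
  exact ⟨by linear_combination he, Or.inr hs⟩

lemma hP : E.Nonsingular 0 0 := by
  apply nonsing <;> norm_num

lemma h2 : E.Nonsingular (-720663120331059917723712)
    (-845986356686290242461087641062062592) := by
  apply nonsing <;> norm_num

lemma h3 : E.Nonsingular 790040842201375992403176
    (-1016711767715738277263697837529276968) := by
  apply nonsing <;> norm_num

lemma h4 : E.Nonsingular 790040842201375992403176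
    927428856662286109724024768564644416 := by
  apply nonsing <;> norm_num

end EAux

/-- On the rank-6 record curve with torsion `ℤ/7ℤ`, the point `(0,0)` has order exactly 7. -/
theorem point_order_seven :
    ∃ h : E.Nonsingular 0 0, addOrderOf (WeierstrassCurve.Affine.Point.some _ _ h) = 7 := by
  open WeierstrassCurve.Affine EAux in
  refine ⟨hP, ?_⟩
  set P : E.Point := Point.some _ _ hP with hPdef
  have hyP : (0 : ℚ) ≠ E.negY 0 0 := by
    rw [WeierstrassCurve.Affine.negY, Ea₁, Ea₃]; norm_num
  have e2 : P + P = Point.some _ _ h2 := by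
    rw [hPdef, Point.add_self_of_Y_ne hyP]
    apply some_eq
    · rw [WeierstrassCurve.Affine.addX, slope_of_Y_ne rfl hyP,
        WeierstrassCurve.Affine.negY, Ea₁, Ea₂, Ea₃, Ea₄]
      norm_num
    · rw [WeierstrassCurve.Affine.addY, WeierstrassCurve.Affine.negAddY,
        WeierstrassCurve.Affine.addX, WeierstrassCurve.Affine.negY,
        slope_of_Y_ne rfl hyP, WeierstrassCurve.Affine.negY,
        Ea₁, Ea₂, Ea₃, Ea₄]
      norm_num
  have hx23 : (-720663120331059917723712 : ℚ) ≠ 0 := by norm_num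
  have e3 : Point.some _ _ h2 + P = Point.some _ _ h3 := by
    rw [hPdef, Point.add_of_X_ne hx23]
    apply some_eq
    · rw [WeierstrassCurve.Affine.addX, slope_of_X_ne hx23, Ea₁, Ea₂]
      norm_num
    · rw [WeierstrassCurve.Affine.addY, WeierstrassCurve.Affine.negAddY,
        WeierstrassCurve.Affine.addX, WeierstrassCurve.Affine.negY,
        slope_of_X_ne hx23, Ea₁, Ea₂, Ea₃]
      norm_num
  have hx34 : (790040842201375992403176 : ℚ) ≠ 0 := by norm_num
  have e4 : Point.some _ _ h3 + P = Point.some _ _ h4 := by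
    rw [hPdef, Point.add_of_X_ne hx34]
    apply some_eq
    · rw [WeierstrassCurve.Affine.addX, slope_of_X_ne hx34, Ea₁, Ea₂]
      norm_num
    · rw [WeierstrassCurve.Affine.addY, WeierstrassCurve.Affine.negAddY,
        WeierstrassCurve.Affine.addX, WeierstrassCurve.Affine.negY,
        slope_of_X_ne hx34, Ea₁, Ea₂, Ea₃]
      norm_num
  have e0 : Point.some _ _ h4 + Point.some _ _ h3 = 0 := by
    apply Point.add_of_Y_eq rfl
    rw [WeierstrassCurve.Affine.negY, Ea₁, Ea₃]
    norm_num
  have h7 : (7 : ℕ) • P = 0 := by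
    have hexp : (7 : ℕ) • P = (P + P + P + P) + (P + P + P) := by abel
    rw [hexp, e2, e3, e4, e0]
  have hPne : P ≠ 0 := by
    rw [hPdef]
    exact fun h => Point.some_ne_zero hP h
  haveI : Fact (Nat.Prime 7) := ⟨by norm_num⟩
  exact addOrderOf_eq_prime h7 hPne
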